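/- Let A be a right coherent ring, let (X, Y) be an intermediate t-structure in D^b(mod A) with heart H, and let (X', Y') be the lifted t-structure (^⊥(X^⊥), X^⊥) in D(Mod A) with heart H'. Then (X' ∩ D^b(mod A), Y' ∩ D^b(mod A)) = (X, Y), and consequently H = H' ∩ D^b(mod A). -/

import Mathlib

/-!
Common definitions for formalizing "Lifting and restricting t-structures"
(Marks–Zvonareva). Right `A`-modules are modelled as `ModuleCat Aᵐᵒᵖ`.
`D(Mod A)` is the derived category `DerivedCategory (ModuleCat Aᵐᵒᵖ)`;
`D^b(mod A)` is modelled, as is standard for coherent rings, as the full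
subcategory of objects with bounded, finitely presented cohomologies.
Directed homotopy colimits are computed as colimits of directed diagrams
of complexes (filtered colimits of complexes of modules are exact).
-/

open CategoryTheory Limits Pretriangulated Opposite

noncomputable section

namespace Paper

universe u

/-- A ring `B` is right coherent if every finitely generated submodule of a
finitely presented right `B`-module is finitely presented. -/
def RightCoherent (B : Type u) [Ring B] : Prop :=
  ∀ (M : Type u) [AddCommGroup M] [Module Bᵐᵒᵖ M],
    Module.FinitePresentation Bᵐᵒᵖ M →
      ∀ N : Submodule Bᵐᵒᵖ M, N.FG → Module.FinitePresentation Bᵐᵒᵖ N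

noncomputable instance (R : Type) [Ring R] :
    HasDerivedCategory (ModuleCat.{0} Rᵐᵒᵖ) :=
  HasDerivedCategory.standard _

/-- The category of right `A`-modules. -/
abbrev Mod (A : Type) [Ring A] := ModuleCat.{0} Aᵐᵒᵖ

/-- The unbounded derived category `D(Mod A)` of all right `A`-modules. -/
abbrev D (A : Type) [Ring A] := DerivedCategory (Mod A)

variable (A : Type) [Ring A]

/-- The `n`-th cohomology functor on the derived category. -/
abbrev H (n : ℤ) : D A ⥤ Mod A := DerivedCategory.homologyFunctor (Mod A) n

/-- The aisle `D^{≤ n}` of (the shift of) the standard t-structure. -/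
def stdLE (n : ℤ) : Set (D A) := {Z | ∀ i : ℤ, n < i → IsZero ((H A i).obj Z)}

/-- The coaisle `D^{≥ n}` of (the shift of) the standard t-structure. -/
def stdGE (n : ℤ) : Set (D A) := {Z | ∀ i : ℤ, i < n → IsZero ((H A i).obj Z)}

/-- The bounded derived category `D^b(mod A)` of finitely presented modules,
realized (for coherent `A`) as the full subcategory of `D(Mod A)` of complexes
with bounded cohomology, all of whose cohomologies are finitely presented. -/
def Dbfp : Set (D A) :=
  {Z | (∀ n : ℤ, Module.FinitePresentation Aᵐᵒᵖ ((H A n).obj Z)) ∧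
    ∃ a b : ℤ, ∀ i : ℤ, (i < a ∨ b < i) → IsZero ((H A i).obj Z)}

/-- A t-structure on a (strict, full triangulated) subcategory `S` of `D(Mod A)`,
given by a pair of strict full subcategories `(X, Y)` of `S`:
both classes are closed under direct summands, `Hom(X, Y) = 0`, `X` is closed
under positive shifts, and every object of `S` admits an approximation triangle
`X' → Z → Y' → X'[1]` with `X' ∈ X`, `Y' ∈ Y`. -/
structure IsTStructureOn (S X Y : Set (D A)) : Prop where
  subsetX : X ⊆ S
  subsetY : Y ⊆ S
  summandX : ∀ Z ∈ X, ∀ (W : D A) (s : W ⟶ Z) (r : Z ⟶ W), s ≫ r = 𝟙 W → W ∈ X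
  summandY : ∀ Z ∈ Y, ∀ (W : D A) (s : W ⟶ Z) (r : Z ⟶ W), s ≫ r = 𝟙 W → W ∈ Y
  homZero : ∀ P ∈ X, ∀ Q ∈ Y, ∀ f : P ⟶ Q, f = 0
  shiftX : ∀ Z ∈ X, Z⟦(1 : ℤ)⟧ ∈ X
  exists_triangle : ∀ Z ∈ S, ∃ (P Q : D A) (_ : P ∈ X) (_ : Q ∈ Y)
    (f : P ⟶ Z) (g : Z ⟶ Q) (h : Q ⟶ P⟦(1 : ℤ)⟧),
      Triangle.mk f g h ∈ distTriang (D A)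

/-- A t-structure on all of `D(Mod A)`. -/
def IsTStructure (X Y : Set (D A)) : Prop := IsTStructureOn A Set.univ X Y

/-- A t-structure `(X, Y)` on `D(Mod A)` is intermediate if
`D^{≤ m} ⊆ X ⊆ D^{≤ n}` for some integers `m ≤? n`. -/
def IsIntermediate (X : Set (D A)) : Prop :=
  ∃ m n : ℤ, stdLE A m ⊆ X ∧ X ⊆ stdLE A n

/-- Intermediacy for a t-structure on the subcategory `D^b(mod A)`:
`D^b(A)^{≤ m} ⊆ X ⊆ D^b(A)^{≤ n}`. -/
def IsIntermediateOn (S X : Set (D A)) : Prop :=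
  ∃ m n : ℤ, stdLE A m ∩ S ⊆ X ∧ X ⊆ stdLE A n

/-- `C^⊥ = {Z : Hom(C, Z) = 0 for all C ∈ C}`. -/
def rightPerp (Cl : Set (D A)) : Set (D A) :=
  {Z | ∀ P ∈ Cl, ∀ f : P ⟶ Z, f = 0}

/-- `^⊥C = {Z : Hom(Z, C) = 0 for all C ∈ C}`. -/
def leftPerp (Cl : Set (D A)) : Set (D A) :=
  {Z | ∀ P ∈ Cl, ∀ f : Z ⟶ P, f = 0}

/-- An object `Z` of `D(Mod A)` is compact if `Hom(Z, −)` commutes with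
(small) coproducts. -/
def IsCompactObj (Z : D A) : Prop :=
  ∀ ι : Type, Nonempty
    (PreservesColimitsOfShape (Discrete ι) (preadditiveCoyoneda.obj (op Z)))

/-- `(X, Y)` is a compactly generated t-structure: it is a t-structure and
`Y = S^⊥` for a set `S` of compact objects. -/
def IsCompactlyGeneratedTStructure (X Y : Set (D A)) : Prop :=
  IsTStructure A X Y ∧
    ∃ S : Set (D A), (∀ s ∈ S, IsCompactObj A s) ∧ Y = rightPerp A S

/-- `Z` is a directed homotopy colimit of objects of `C`: there is a directed
(filtered) small category `I` and an `I`-diagram of complexes, all of whose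
vertices lie in `C` (viewed in the derived category), such that `Z` is
isomorphic to its (homotopy) colimit. (Directed homotopy colimits in
`D(Mod A)` are computed as direct limits of complexes.) -/
def IsDirHocolimOf (Z : D A) (Cl : Set (D A)) : Prop :=
  ∃ (I : Cat.{0, 0}) (F : I ⥤ CochainComplex (Mod A) ℤ),
    IsFiltered I ∧ (∀ i : I, DerivedCategory.Q.obj (F.obj i) ∈ Cl) ∧
      Nonempty (Z ≅ DerivedCategory.Q.obj (colimit F))

/-- `hocolim→(C)`: the smallest (strict, full) subcategory of `D(Mod A)`
containing `C` and closed under directed homotopy colimits of diagrams with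
vertices in `C`. -/
def hocolimClosure (Cl : Set (D A)) : Set (D A) :=
  Cl ∪ {Z | IsDirHocolimOf A Z Cl}

/-- A class `C ⊆ D(Mod A)` is closed under directed homotopy colimits. -/
def ClosedUnderDirHocolim (Cl : Set (D A)) : Prop :=
  ∀ Z : D A, IsDirHocolimOf A Z Cl → Z ∈ Cl

/-- The shifted class `C[n] = {Z[n] : Z ∈ C}` (as a strict subcategory). -/
def shiftSet (Cl : Set (D A)) (n : ℤ) : Set (D A) :=
  {Z | ∃ W ∈ Cl, Nonempty (Z ≅ W⟦n⟧)}

/-- The heart `X ∩ Y[1]` of a t-structure `(X, Y)`. -/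
def heartSet (X Y : Set (D A)) : Set (D A) := X ∩ shiftSet A Y 1

/-- The heart of a t-structure `(X, Y)`, as a full subcategory. -/
abbrev HeartCat (X Y : Set (D A)) := ObjectProperty.FullSubcategory (fun Z => Z ∈ heartSet A X Y)



universe w₂ v₂ u₂

/-- Full subcategories of preadditive categories are preadditive. -/
instance fullSubcategoryPreadditive {C : Type u₂} [Category.{v₂} C] [Preadditive C]
    (P : C → Prop) : Preadditive (ObjectProperty.FullSubcategory P) where
  homGroup X Y := InducedCategory.homEquiv.addCommGroup
  add_comp _ _ _ _ _ _ := by ext; apply Preadditive.add_comp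
  comp_add _ _ _ _ _ _ := by ext; apply Preadditive.comp_add

/-- An object `X` of a category is finitely presented if `Hom(X, −)` commutes
with direct limits (filtered colimits). -/
def IsFPObject {𝒜 : Type u₂} [Category.{v₂} 𝒜] (X : 𝒜) : Prop :=
  ∀ I : Cat.{0, 0}, IsFiltered I →
    Nonempty (PreservesColimitsOfShape I (coyoneda.obj (op X)))

/-- A Grothendieck category: an abelian category with a separator (generator)
in which directed colimits exist and are exact (AB5). -/
structure IsGrothendieckCat (𝒜 : Type u₂) [Category.{v₂} 𝒜] : Prop where
  abelian : Nonempty (Abelian 𝒜)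
  hasFilteredColimits : ∀ I : Cat.{0, 0}, IsFiltered I → HasColimitsOfShape I 𝒜
  ab5 : ∀ (I : Cat.{0, 0}) [HasColimitsOfShape I 𝒜], IsFiltered I →
    Nonempty (PreservesFiniteLimits (colim (J := I) (C := 𝒜)))
  hasSeparator : ∃ G : 𝒜, IsSeparator G

/-- A locally coherent Grothendieck category: a Grothendieck category with a
generating set of finitely presented objects in which the finitely presented
objects form an exact abelian subcategory (equivalently, are closed under
kernels). -/
structure IsLocallyCoherentCat (𝒜 : Type u₂) [Category.{v₂} 𝒜]
    [HasZeroMorphisms 𝒜] : Prop where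
  grothendieck : IsGrothendieckCat 𝒜
  fpGenerators : ∃ G : Set 𝒜, (∀ X ∈ G, IsFPObject X) ∧ ObjectProperty.IsSeparating (fun X => X ∈ G)
  fpClosedUnderKernels : ∀ (X Y : 𝒜) (f : X ⟶ Y), IsFPObject X → IsFPObject Y →
    ∀ (K : 𝒜) (k : K ⟶ X) (w : k ≫ f = 0),
      Nonempty (IsLimit (KernelFork.ofι k w)) → IsFPObject K


/-- The finitely presented right `A`-modules, i.e. the objects of `mod A`. -/
def fpMods : Set (Mod A) := {M | Module.FinitePresentation Aᵐᵒᵖ M}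

/-- A torsion pair `(T, F)` on a (strict, full) subcategory `S` of `Mod A`:
`Hom(T, F) = 0` and every `M ∈ S` fits into a short exact sequence
`0 → t(M) → M → M/t(M) → 0` with `t(M) ∈ T`, `M/t(M) ∈ F`. -/
structure IsTorsionPairOn (S T F : Set (Mod A)) : Prop where
  subsetT : T ⊆ S
  subsetF : F ⊆ S
  isoClosedT : ∀ M ∈ T, ∀ N : Mod A, Nonempty (N ≅ M) → N ∈ T
  isoClosedF : ∀ M ∈ F, ∀ N : Mod A, Nonempty (N ≅ M) → N ∈ F
  homZero : ∀ M ∈ T, ∀ N ∈ F, ∀ f : M ⟶ N, f = 0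
  exists_ses : ∀ M ∈ S, ∃ (t f : Mod A) (_ : t ∈ T) (_ : f ∈ F)
    (i : t ⟶ M) (p : M ⟶ f) (z : i ≫ p = 0), (ShortComplex.mk i p z).ShortExact

/-- A torsion pair in `Mod A`. -/
def IsTorsionPair (T F : Set (Mod A)) : Prop :=
  IsTorsionPairOn A Set.univ T F

/-- The closure `lim→(C)` of a class of modules under direct limits:
the class of all direct limits of directed systems with terms in `C`. -/
def limClosure (Cl : Set (Mod A)) : Set (Mod A) :=
  {M | ∃ (I : Cat.{0, 0}) (F : I ⥤ Mod A),
    IsFiltered I ∧ (∀ i : I, F.obj i ∈ Cl) ∧ Nonempty (M ≅ colimit F)}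

/-- A torsion pair `(T, F)` in `Mod A` is of finite type if `F` is closed
under direct limits. -/
def IsFiniteType (T F : Set (Mod A)) : Prop :=
  IsTorsionPair A T F ∧ limClosure A F ⊆ F

/-- `^⊥F` in `Mod A`. -/
def modLeftPerp (F : Set (Mod A)) : Set (Mod A) :=
  {M | ∀ N ∈ F, ∀ f : M ⟶ N, f = 0}

/-- `T^⊥` in `Mod A`. -/
def modRightPerp (T : Set (Mod A)) : Set (Mod A) :=
  {N | ∀ M ∈ T, ∀ f : M ⟶ N, f = 0}

/-- A pure submodule: every finite system of `A`-linear equations with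
constants in `N` that is solvable in `M` is solvable in `N`. -/
def IsPureSubmodule {R : Type u₂} [Ring R] {M : Type u₂} [AddCommGroup M]
    [Module R M] (N : Submodule R M) : Prop :=
  ∀ (m n : ℕ) (a : Matrix (Fin m) (Fin n) R) (x : Fin m → N),
    (∃ y : Fin n → M, ∀ i, (∑ j, a i j • y j) = (x i : M)) →
      ∃ y : Fin n → N, ∀ i, (∑ j, a i j • y j) = x i

/-- A definable subcategory of `Mod A`: a strict full subcategory closed under
products, direct limits and pure submodules. -/
structure IsDefinable (Dc : Set (Mod A)) : Prop where
  isoClosed : ∀ M ∈ Dc, ∀ N : Mod A, Nonempty (N ≅ M) → N ∈ Dc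
  prodClosed : ∀ (ι : Type) (f : ι → Mod A) (c : Fan f), IsLimit c →
    (∀ i, f i ∈ Dc) → c.pt ∈ Dc
  limClosed : limClosure A Dc ⊆ Dc
  pureClosed : ∀ M ∈ Dc, ∀ N : Submodule Aᵐᵒᵖ M, IsPureSubmodule N →
    ModuleCat.of Aᵐᵒᵖ N ∈ Dc


/-- The aisle of the HRS-t-structure associated to a torsion class `T`:
`{Z : Hⁱ(Z) = 0 for i > 0 and H⁰(Z) ∈ T}`. -/
def hrsAisle (T : Set (Mod A)) : Set (D A) :=
  {Z | (∀ i : ℤ, 0 < i → IsZero ((H A i).obj Z)) ∧ (H A 0).obj Z ∈ T}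

/-- The coaisle of the HRS-t-structure associated to a torsion-free class `F`:
`{Z : Hⁱ(Z) = 0 for i < 0 and H⁰(Z) ∈ F}`. -/
def hrsCoaisle (F : Set (Mod A)) : Set (D A) :=
  {Z | (∀ i : ℤ, i < 0 → IsZero ((H A i).obj Z)) ∧ (H A 0).obj Z ∈ F}

/-- `T^{⊥_{>0}} = {Z : Hom(T, Z[i]) = 0 for all i > 0}`. -/
def perpGT (T : D A) : Set (D A) :=
  {Z | ∀ i : ℤ, 0 < i → ∀ f : T ⟶ Z⟦i⟧, f = 0}

/-- `T^{⊥_{≤0}} = {Z : Hom(T, Z[i]) = 0 for all i ≤ 0}`. -/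
def perpLE (T : D A) : Set (D A) :=
  {Z | ∀ i : ℤ, i ≤ 0 → ∀ f : T ⟶ Z⟦i⟧, f = 0}

/-- `^{⊥_{≤0}}C = {Z : Hom(Z, C[i]) = 0 for all i ≤ 0}`. -/
def coperpLE (Co : D A) : Set (D A) :=
  {Z | ∀ i : ℤ, i ≤ 0 → ∀ f : Z ⟶ Co⟦i⟧, f = 0}

/-- `^{⊥_{>0}}C = {Z : Hom(Z, C[i]) = 0 for all i > 0}`. -/
def coperpGT (Co : D A) : Set (D A) :=
  {Z | ∀ i : ℤ, 0 < i → ∀ f : Z ⟶ Co⟦i⟧, f = 0}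

/-- An object `T` of `D(Mod A)` is silting if `(T^{⊥_{>0}}, T^{⊥_{≤0}})` is a
t-structure. -/
def IsSilting (T : D A) : Prop := IsTStructure A (perpGT A T) (perpLE A T)

/-- An object `C` of `D(Mod A)` is cosilting if `(^{⊥_{≤0}}C, ^{⊥_{>0}}C)` is a
t-structure. -/
def IsCosilting (Co : D A) : Prop :=
  IsTStructure A (coperpLE A Co) (coperpGT A Co)

/-- The subcategory `K^b(proj A)` of `D(Mod A)`: objects isomorphic to bounded
complexes of finitely generated projective modules. -/
def KbProj : Set (D A) :=
  {Z | ∃ P : CochainComplex (Mod A) ℤ,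
    (∀ n : ℤ, Projective (P.X n) ∧ Module.Finite Aᵐᵒᵖ (P.X n)) ∧
    (∃ a b : ℤ, ∀ i : ℤ, (i < a ∨ b < i) → IsZero (P.X i)) ∧
    Nonempty (Z ≅ DerivedCategory.Q.obj P)}

/-- The subcategory `K^b(inj A)` of `D(Mod A)`: objects isomorphic to bounded
complexes of finitely generated injective modules. -/
def KbInj : Set (D A) :=
  {Z | ∃ P : CochainComplex (Mod A) ℤ,
    (∀ n : ℤ, Injective (P.X n) ∧ Module.Finite Aᵐᵒᵖ (P.X n)) ∧
    (∃ a b : ℤ, ∀ i : ℤ, (i < a ∨ b < i) → IsZero (P.X i)) ∧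
    Nonempty (Z ≅ DerivedCategory.Q.obj P)}

/-- Objects isomorphic to bounded complexes of (not necessarily finitely
generated) projective modules. -/
def BoundedProjComplexes : Set (D A) :=
  {Z | ∃ P : CochainComplex (Mod A) ℤ,
    (∀ n : ℤ, Projective (P.X n)) ∧
    (∃ a b : ℤ, ∀ i : ℤ, (i < a ∨ b < i) → IsZero (P.X i)) ∧
    Nonempty (Z ≅ DerivedCategory.Q.obj P)}

/-- A thick subcategory of `D(Mod A)`: a strict full triangulated subcategory
closed under direct summands. -/
structure IsThickSubcat (S : Set (D A)) : Prop where
  shift : ∀ Z ∈ S, ∀ n : ℤ, Z⟦n⟧ ∈ S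
  summand : ∀ Z ∈ S, ∀ (W : D A) (s : W ⟶ Z) (r : Z ⟶ W), s ≫ r = 𝟙 W → W ∈ S
  isoClosed : ∀ Z ∈ S, ∀ W : D A, Nonempty (W ≅ Z) → W ∈ S
  ext₃ : ∀ T : Triangle (D A), (T ∈ distTriang (D A)) →
    T.obj₁ ∈ S → T.obj₂ ∈ S → T.obj₃ ∈ S

/-- The smallest thick (triangulated, summand-closed) subcategory of
`D(Mod A)` containing `T`. -/
def thickClosure (T : D A) : Set (D A) :=
  ⋂₀ {S | IsThickSubcat A S ∧ T ∈ S}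

/-- A tilting complex: `T ∈ K^b(proj A)` with `Hom(T, T[i]) = 0` for `i ≠ 0`
which generates `K^b(proj A)` as a thick subcategory. -/
def IsTilting (T : D A) : Prop :=
  T ∈ KbProj A ∧ (∀ i : ℤ, i ≠ 0 → ∀ f : T ⟶ T⟦i⟧, f = 0) ∧
    thickClosure A T = KbProj A

/-- A pair `(X, Y)` of classes in `D(Mod A)` restricts to `D^b(mod A)` if
`(X ∩ D^b(mod A), Y ∩ D^b(mod A))` is a t-structure in `D^b(mod A)`. -/
def RestrictsToDb (X Y : Set (D A)) : Prop :=
  IsTStructureOn A (Dbfp A) (X ∩ Dbfp A) (Y ∩ Dbfp A)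

/-- A co-t-structure on a subcategory `S` of `D(Mod A)`: like a t-structure,
but the first class `U` is closed under negative shifts. -/
structure IsCoTStructureOn (S U V : Set (D A)) : Prop where
  subsetU : U ⊆ S
  subsetV : V ⊆ S
  summandU : ∀ Z ∈ U, ∀ (W : D A) (s : W ⟶ Z) (r : Z ⟶ W), s ≫ r = 𝟙 W → W ∈ U
  summandV : ∀ Z ∈ V, ∀ (W : D A) (s : W ⟶ Z) (r : Z ⟶ W), s ≫ r = 𝟙 W → W ∈ V
  homZero : ∀ P ∈ U, ∀ Q ∈ V, ∀ f : P ⟶ Q, f = 0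
  shiftU : ∀ Z ∈ U, Z⟦(-1 : ℤ)⟧ ∈ U
  exists_triangle : ∀ Z ∈ S, ∃ (P Q : D A) (_ : P ∈ U) (_ : Q ∈ V)
    (f : P ⟶ Z) (g : Z ⟶ Q) (h : Q ⟶ P⟦(1 : ℤ)⟧),
      Triangle.mk f g h ∈ distTriang (D A)


/-- Finite presentation transfers along isomorphisms of modules. -/
lemma fp_of_iso {A : Type} [Ring A] {M N : Mod A} (e : M ≅ N)
    (h : Module.FinitePresentation Aᵐᵒᵖ N) : Module.FinitePresentation Aᵐᵒᵖ M := by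
  have := h
  exact Module.FinitePresentation.of_equiv e.symm.toLinearEquiv

/-- `D^b(mod A)` is closed under isomorphisms. -/
lemma Dbfp_iso {A : Type} [Ring A] {Z W : D A} (e : W ≅ Z) (h : Z ∈ Dbfp A) :
    W ∈ Dbfp A := by
  obtain ⟨h1, a, b, h2⟩ := h
  exact ⟨fun n => fp_of_iso ((H A n).mapIso e) (h1 n), a, b,
    fun i hi => (h2 i hi).of_iso ((H A i).mapIso e)⟩

/-- `D^b(mod A)` is closed under shifts. -/
lemma Dbfp_shift {A : Type} [Ring A] {Z : D A} (h : Z ∈ Dbfp A) (n : ℤ) :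
    Z⟦n⟧ ∈ Dbfp A := by
  obtain ⟨h1, a, b, h2⟩ := h
  have e : ∀ i : ℤ, (H A i).obj (Z⟦n⟧) ≅ (H A (n + i)).obj Z := fun i =>
    ((DerivedCategory.homologyFunctor (Mod A) 0).shiftIso n i (n + i) rfl).app Z
  exact ⟨fun i => fp_of_iso (e i) (h1 _), a - n, b - n,
    fun i hi => ((h2 (n + i) (by omega)).of_iso (e i))⟩

/-- the lifted t-structure restricts back to `(X, Y)` on
`D^b(mod A)`, and accordingly its heart intersected with `D^b(mod A)` is the
heart of `(X, Y)`. -/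
theorem lift_restricts_back (A : Type) [Ring A]
    (hA : RightCoherent A) (X Y : Set (D A))
    (ht : IsTStructureOn A (Dbfp A) X Y)
    (hint : IsIntermediateOn A (Dbfp A) X) :
    leftPerp A (rightPerp A X) ∩ Dbfp A = X ∧
    rightPerp A X ∩ Dbfp A = Y ∧
    heartSet A (leftPerp A (rightPerp A X)) (rightPerp A X) ∩ Dbfp A =
      heartSet A X Y := by
  -- `Y` is contained in `X^⊥`
  have hYsub : Y ⊆ rightPerp A X := fun Q hQ P hP f => ht.homZero P hP Q hQ f
  -- `X` is contained in `^⊥(X^⊥)`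
  have hXsub : X ⊆ leftPerp A (rightPerp A X) := fun P hP Z hZ f => hZ P hP f
  -- `X^⊥ ∩ D^b = Y`
  have hY : rightPerp A X ∩ Dbfp A = Y := by
    apply Set.Subset.antisymm
    · rintro Z ⟨hZperp, hZb⟩
      obtain ⟨P, Q, hP, hQ, f, g, h, hT⟩ := ht.exists_triangle Z hZb
      have hf : f = 0 := hZperp P hP f
      obtain ⟨r, hr⟩ := Pretriangulated.Triangle.yoneda_exact₂ _ hT (𝟙 Z)
        (by show f ≫ 𝟙 Z = 0; rw [hf, zero_comp])
      exact ht.summandY Q hQ Z g r hr.symm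
    · exact fun Z hZ => ⟨hYsub hZ, ht.subsetY hZ⟩
  -- `^⊥(X^⊥) ∩ D^b = X`
  have hX : leftPerp A (rightPerp A X) ∩ Dbfp A = X := by
    apply Set.Subset.antisymm
    · rintro Z ⟨hZperp, hZb⟩
      obtain ⟨P, Q, hP, hQ, f, g, h, hT⟩ := ht.exists_triangle Z hZb
      have hg : g = 0 := hZperp Q (hYsub hQ) g
      obtain ⟨s, hs⟩ := Pretriangulated.Triangle.coyoneda_exact₂ _ hT (𝟙 Z)
        (by show 𝟙 Z ≫ g = 0; rw [hg, comp_zero])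
      exact ht.summandX P hP Z s f hs.symm
    · exact fun P hP => ⟨hXsub hP, ht.subsetX hP⟩
  refine ⟨hX, hY, ?_⟩
  apply Set.Subset.antisymm
  · rintro Z ⟨⟨hZX', W, hW, ⟨e⟩⟩, hZb⟩
    have hZX : Z ∈ X := by rw [← hX]; exact ⟨hZX', hZb⟩
    -- `W ≅ Z⟦-1⟧` is in `D^b`
    have eW : W ≅ Z⟦(-1 : ℤ)⟧ :=
      ((shiftFunctorCompIsoId (D A) (1 : ℤ) (-1 : ℤ) (by ring)).app W).symm ≪≫
        (shiftFunctor (D A) (-1 : ℤ)).mapIso e.symm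
    have hWb : W ∈ Dbfp A := Dbfp_iso eW (Dbfp_shift hZb (-1))
    have hWY : W ∈ Y := by rw [← hY]; exact ⟨hW, hWb⟩
    exact ⟨hZX, W, hWY, ⟨e⟩⟩
  · rintro Z ⟨hZX, W, hW, ⟨e⟩⟩
    exact ⟨⟨hXsub hZX, W, hYsub hW, ⟨e⟩⟩, ht.subsetX hZX⟩

end Paper
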